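/- Let T > 0, r, μ₁, μ₂ ∈ ℝ, σ₁ > 0, σ₂ > 0. For reals P₁ ≥ 0, P₂ ≥ 0 define Θ̄₁(P₁,P₂) = −{σ₁ + P₁[σ₁ − σ₂²P₂σ₁/(σ₂+σ₂²P₂)]²}⁻¹ · {P₁[(μ₁−r) − (μ₂−r)σ₂P₂σ₁/(σ₂+σ₂²P₂)] − P₁[σ₁ − σ₂²P₂σ₁/(σ₂+σ₂²P₂)]·[σ₂(μ₂−r)P₂/(σ₂+σ₂²P₂)]}. Then there exists exactly one pair of continuously differentiable functions P₁, P₂ : [0,T] → [0,∞) satisfying, for all s ∈ [0,T] (with Θ̄₁ = Θ̄₁(P₁(s),P₂(s))): P₂'(s) = −2[r+(μ₁−r)Θ̄₁]P₂ − σ₁²Θ̄₁²P₂ + [P₂(μ₂−r)+σ₁Θ̄₁P₂σ₂]²/(σ₂+σ₂²P₂), P₁'(s) = −2P₁{r+(μ₁−r)Θ̄₁ − (μ₂−r)[(μ₂−r)P₂+σ₂P₂σ₁Θ̄₁]/(σ₂+σ₂²P₂)} − P₁{σ₁Θ̄₁ − σ₂[(μ₂−r)P₂+σ₂P₂σ₁Θ̄₁]/(σ₂+σ₂²P₂)}²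 − σ₁Θ̄₁², with terminal conditions P₂(T) = 1 and P₁(T) = 1. -/

import Mathlib

set_option linter.unusedVariables false
set_option maxHeartbeats 1000000

noncomputable section

/-- The leader's equilibrium gain `Θ̄₁(P₁,P₂)` for the asset-management scalar ERE. -/
def assetTheta1 (r μ₁ μ₂ σ₁ σ₂ P₁ P₂ : ℝ) : ℝ :=
  -(σ₁ + P₁ * (σ₁ - σ₂ ^ 2 * P₂ * σ₁ / (σ₂ + σ₂ ^ 2 * P₂)) ^ 2)⁻¹ *
    (P₁ * ((μ₁ - r) - (μ₂ - r) * σ₂ * P₂ * σ₁ / (σ₂ + σ₂ ^ 2 * P₂))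
      - P₁ * (σ₁ - σ₂ ^ 2 * P₂ * σ₁ / (σ₂ + σ₂ ^ 2 * P₂))
          * (σ₂ * (μ₂ - r) * P₂ / (σ₂ + σ₂ ^ 2 * P₂)))

/-- Right-hand side of the `P₂`-equation of the asset-management scalar ERE. -/
def assetRhs2 (r μ₁ μ₂ σ₁ σ₂ P₁ P₂ : ℝ) : ℝ :=
  -2 * (r + (μ₁ - r) * assetTheta1 r μ₁ μ₂ σ₁ σ₂ P₁ P₂) * P₂
    - σ₁ ^ 2 * (assetTheta1 r μ₁ μ₂ σ₁ σ₂ P₁ P₂) ^ 2 * P₂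
    + (P₂ * (μ₂ - r) + σ₁ * assetTheta1 r μ₁ μ₂ σ₁ σ₂ P₁ P₂ * P₂ * σ₂) ^ 2
        / (σ₂ + σ₂ ^ 2 * P₂)

/-- Right-hand side of the `P₁`-equation of the asset-management scalar ERE. -/
def assetRhs1 (r μ₁ μ₂ σ₁ σ₂ P₁ P₂ : ℝ) : ℝ :=
  -2 * P₁ * (r + (μ₁ - r) * assetTheta1 r μ₁ μ₂ σ₁ σ₂ P₁ P₂
      - (μ₂ - r) * ((μ₂ - r) * P₂ + σ₂ * P₂ * σ₁ * assetTheta1 r μ₁ μ₂ σ₁ σ₂ P₁ P₂)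
          / (σ₂ + σ₂ ^ 2 * P₂))
    - P₁ * (σ₁ * assetTheta1 r μ₁ μ₂ σ₁ σ₂ P₁ P₂
      - σ₂ * ((μ₂ - r) * P₂ + σ₂ * P₂ * σ₁ * assetTheta1 r μ₁ μ₂ σ₁ σ₂ P₁ P₂)
          / (σ₂ + σ₂ ^ 2 * P₂)) ^ 2
    - σ₁ * (assetTheta1 r μ₁ μ₂ σ₁ σ₂ P₁ P₂) ^ 2

/-- A pair `(P₁,P₂)` of nonnegative continuously differentiable functions solving the
asset-management scalar ERE on `[0,T]` with terminal values `P₁(T) = P₂(T) = 1`. -/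
def IsAssetERESolution (T r μ₁ μ₂ σ₁ σ₂ : ℝ) (P₁ P₂ : ℝ → ℝ) : Prop :=
  (∀ s ∈ Set.Icc (0 : ℝ) T, 0 ≤ P₁ s ∧ 0 ≤ P₂ s) ∧
  (∀ s ∈ Set.Icc (0 : ℝ) T,
    HasDerivWithinAt P₂ (assetRhs2 r μ₁ μ₂ σ₁ σ₂ (P₁ s) (P₂ s)) (Set.Icc (0 : ℝ) T) s ∧
    HasDerivWithinAt P₁ (assetRhs1 r μ₁ μ₂ σ₁ σ₂ (P₁ s) (P₂ s)) (Set.Icc (0 : ℝ) T) s) ∧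
  P₂ T = 1 ∧ P₁ T = 1


namespace AERE
open Set NNReal

/-! ### Clean rational forms of the coefficients -/

def thetaF (r μ₁ μ₂ σ₁ σ₂ p₁ p₂ : ℝ) : ℝ :=
  -(p₁ * ((μ₁ - r) * (1 + σ₂ * p₂) ^ 2 - (μ₂ - r) * σ₁ * p₂ * (2 + σ₂ * p₂))) /
    (σ₁ * ((1 + σ₂ * p₂) ^ 2 + p₁ * σ₁))

def G1 (r μ₁ μ₂ σ₁ σ₂ p₁ p₂ : ℝ) : ℝ :=
  -p₁ * (2 * r - 2 * (μ₂ - r) ^ 2 * (p₂ / (1 + σ₂ * p₂)) / σ₂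
        + (μ₂ - r) ^ 2 * (p₂ / (1 + σ₂ * p₂)) ^ 2)
    + (thetaF r μ₁ μ₂ σ₁ σ₂ p₁ p₂) ^ 2 * (σ₁ + p₁ * (σ₁ / (1 + σ₂ * p₂)) ^ 2)

def G2 (r μ₁ μ₂ σ₁ σ₂ p₁ p₂ : ℝ) : ℝ :=
  p₂ * (-2 * r + (μ₂ - r) ^ 2 * (p₂ / (1 + σ₂ * p₂)) / σ₂
    - 2 * ((μ₁ - r) - (μ₂ - r) * σ₁ * (p₂ / (1 + σ₂ * p₂))) * thetaF r μ₁ μ₂ σ₁ σ₂ p₁ p₂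
    - σ₁ * (σ₁ / (1 + σ₂ * p₂)) * (thetaF r μ₁ μ₂ σ₁ σ₂ p₁ p₂) ^ 2)

variable {r μ₁ μ₂ σ₁ σ₂ p₁ p₂ M₁ Θb M : ℝ}

lemma theta_eq (hσ₁ : 0 < σ₁) (hσ₂ : 0 < σ₂) (hp₁ : 0 ≤ p₁) (hp₂ : 0 ≤ p₂) :
    assetTheta1 r μ₁ μ₂ σ₁ σ₂ p₁ p₂ = thetaF r μ₁ μ₂ σ₁ σ₂ p₁ p₂ := by
  have hc : (0:ℝ) < 1 + σ₂ * p₂ := by positivity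
  have hD : σ₂ + σ₂ ^ 2 * p₂ ≠ 0 := by nlinarith
  have h1 : σ₁ - σ₂ ^ 2 * p₂ * σ₁ / (σ₂ + σ₂ ^ 2 * p₂) = σ₁ / (1 + σ₂ * p₂) := by
    field_simp; ring
  have hW : σ₁ + p₁ * (σ₁ - σ₂ ^ 2 * p₂ * σ₁ / (σ₂ + σ₂ ^ 2 * p₂)) ^ 2 ≠ 0 := by
    rw [h1]; positivity
  have hK : σ₁ * ((1 + σ₂ * p₂) ^ 2 + p₁ * σ₁) ≠ 0 := by positivity
  rw [assetTheta1, thetaF, h1, div_pow]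
  field_simp
  ring

lemma rhs2_eq (hσ₁ : 0 < σ₁) (hσ₂ : 0 < σ₂) (hp₁ : 0 ≤ p₁) (hp₂ : 0 ≤ p₂) :
    assetRhs2 r μ₁ μ₂ σ₁ σ₂ p₁ p₂ = G2 r μ₁ μ₂ σ₁ σ₂ p₁ p₂ := by
  have hc : (0:ℝ) < 1 + σ₂ * p₂ := by positivity
  have hD : σ₂ + σ₂ ^ 2 * p₂ ≠ 0 := by nlinarith
  rw [assetRhs2, theta_eq hσ₁ hσ₂ hp₁ hp₂, G2]
  set θ := thetaF r μ₁ μ₂ σ₁ σ₂ p₁ p₂ with hθ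
  field_simp
  ring

lemma rhs1_eq (hσ₁ : 0 < σ₁) (hσ₂ : 0 < σ₂) (hp₁ : 0 ≤ p₁) (hp₂ : 0 ≤ p₂) :
    assetRhs1 r μ₁ μ₂ σ₁ σ₂ p₁ p₂ = G1 r μ₁ μ₂ σ₁ σ₂ p₁ p₂ := by
  have hc : (0:ℝ) < 1 + σ₂ * p₂ := by positivity
  have hcne : (1 + σ₂ * p₂) ≠ 0 := ne_of_gt hc
  have hD : σ₂ + σ₂ ^ 2 * p₂ ≠ 0 := by nlinarith
  rw [assetRhs1, theta_eq hσ₁ hσ₂ hp₁ hp₂, G1]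
  set θ := thetaF r μ₁ μ₂ σ₁ σ₂ p₁ p₂ with hθ
  have hrel : (σ₁ + p₁ * (σ₁ / (1 + σ₂ * p₂)) ^ 2) * θ
      = -(p₁ * (((μ₁ - r) - (μ₂ - r) * σ₁ * (p₂ / (1 + σ₂ * p₂)))
          - (μ₂ - r) * (p₂ / (1 + σ₂ * p₂)) * (σ₁ / (1 + σ₂ * p₂)))) := by
    rw [hθ, thetaF]
    field_simp
    ring
  have hA : -2 * p₁ * (r + (μ₁ - r) * θ
        - (μ₂ - r) * ((μ₂ - r) * p₂ + σ₂ * p₂ * σ₁ * θ) / (σ₂ + σ₂ ^ 2 * p₂))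
      - p₁ * (σ₁ * θ - σ₂ * ((μ₂ - r) * p₂ + σ₂ * p₂ * σ₁ * θ) / (σ₂ + σ₂ ^ 2 * p₂)) ^ 2
      - σ₁ * θ ^ 2
      = -p₁ * (2 * r - 2 * (μ₂ - r) ^ 2 * (p₂ / (1 + σ₂ * p₂)) / σ₂
          + (μ₂ - r) ^ 2 * (p₂ / (1 + σ₂ * p₂)) ^ 2)
        - 2 * θ * (p₁ * (((μ₁ - r) - (μ₂ - r) * σ₁ * (p₂ / (1 + σ₂ * p₂)))
            - (μ₂ - r) * (p₂ / (1 + σ₂ * p₂)) * (σ₁ / (1 + σ₂ * p₂))))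
        - (σ₁ + p₁ * (σ₁ / (1 + σ₂ * p₂)) ^ 2) * θ ^ 2 := by
    field_simp
    ring
  rw [hA]
  linear_combination (-2 * θ) * hrel

/-! ### A priori inequalities -/

private lemma g1_aux (r b σ₁ σ₂ p₁ p₂ θ W : ℝ) (hσ₂ : 0 < σ₂)
    (hp₁ : 0 ≤ p₁) (hp₂ : 0 ≤ p₂) (hW : 0 ≤ W) :
    -(2 * |r| * p₁) ≤
      -p₁ * (2 * r - 2 * b ^ 2 * (p₂ / (1 + σ₂ * p₂)) / σ₂
        + b ^ 2 * (p₂ / (1 + σ₂ * p₂)) ^ 2) + θ ^ 2 * W := by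
  have hc : (0:ℝ) < 1 + σ₂ * p₂ := by positivity
  set e := p₂ / (1 + σ₂ * p₂) with he
  have he0 : 0 ≤ e := by positivity
  have he2 : e ≤ 2 / σ₂ := by
    rw [he, div_le_div_iff₀ hc hσ₂]; nlinarith
  have hr : r ≤ |r| := le_abs_self r
  have hW2 : 0 ≤ θ ^ 2 * W := by positivity
  have hkey : 0 ≤ b ^ 2 * e * (2 / σ₂ - e) :=
    mul_nonneg (mul_nonneg (sq_nonneg b) he0) (by linarith)
  have h2 : 0 ≤ 2 * b ^ 2 * e / σ₂ - b ^ 2 * e ^ 2 := by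
    have h3 : b ^ 2 * e * (2 / σ₂ - e) = 2 * b ^ 2 * e / σ₂ - b ^ 2 * e ^ 2 := by
      field_simp
    linarith [h3 ▸ hkey]
  nlinarith [mul_nonneg hp₁ h2]

lemma G1_ge (hσ₁ : 0 < σ₁) (hσ₂ : 0 < σ₂) (hp₁ : 0 ≤ p₁) (hp₂ : 0 ≤ p₂) :
    -(2 * |r| * p₁) ≤ G1 r μ₁ μ₂ σ₁ σ₂ p₁ p₂ := by
  have hc : (0:ℝ) < 1 + σ₂ * p₂ := by positivity
  have hW : (0:ℝ) ≤ σ₁ + p₁ * (σ₁ / (1 + σ₂ * p₂)) ^ 2 := by positivity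
  exact g1_aux r (μ₂ - r) σ₁ σ₂ p₁ p₂ _ _ hσ₂ hp₁ hp₂ hW

private lemma theta_abs_aux (a b σ₁ σ₂ p₁ p₂ M₁ : ℝ) (hσ₁ : 0 < σ₁) (hσ₂ : 0 < σ₂)
    (hp₁ : 0 ≤ p₁) (hp₂ : 0 ≤ p₂) (hM : p₁ ≤ M₁) :
    |(-(p₁ * (a * (1 + σ₂ * p₂) ^ 2 - b * σ₁ * p₂ * (2 + σ₂ * p₂))) /
      (σ₁ * ((1 + σ₂ * p₂) ^ 2 + p₁ * σ₁)))| ≤ (|a| * σ₂ + 2 * |b| * σ₁) * M₁ / (σ₁ * σ₂) := by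
  have hc : (0:ℝ) < 1 + σ₂ * p₂ := by positivity
  have hK : (0:ℝ) < (1 + σ₂ * p₂) ^ 2 + p₁ * σ₁ := by positivity
  have hden : (0:ℝ) < σ₁ * ((1 + σ₂ * p₂) ^ 2 + p₁ * σ₁) := by positivity
  have hM₁ : 0 ≤ M₁ := le_trans hp₁ hM
  have hN : 0 ≤ |a| * σ₂ + 2 * |b| * σ₁ := by positivity
  rw [abs_div, abs_of_pos hden, div_le_div_iff₀ hden (by positivity : (0:ℝ) < σ₁ * σ₂)]
  have ha1 : a ≤ |a| := le_abs_self a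
  have ha2 : -|a| ≤ a := neg_abs_le a
  have hb1 : b ≤ |b| := le_abs_self b
  have hb2 : -|b| ≤ b := neg_abs_le b
  have hbs : 0 ≤ |b| := abs_nonneg b
  have hX0 : (0:ℝ) ≤ σ₁ * p₂ * (2 + σ₂ * p₂) := by positivity
  have hA2 : |a * (1 + σ₂ * p₂) ^ 2 - b * σ₁ * p₂ * (2 + σ₂ * p₂)| * σ₂
      ≤ (|a| * σ₂ + 2 * |b| * σ₁) * (1 + σ₂ * p₂) ^ 2 := by
    have habs2 : |a * (1 + σ₂ * p₂) ^ 2 - b * σ₁ * p₂ * (2 + σ₂ * p₂)| * σ₂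
        = |(a * (1 + σ₂ * p₂) ^ 2 - b * σ₁ * p₂ * (2 + σ₂ * p₂)) * σ₂| := by
      rw [abs_mul, abs_of_pos hσ₂]
    rw [habs2, abs_le]
    have key : |b| * (σ₂ * (σ₁ * p₂ * (2 + σ₂ * p₂))) ≤ |b| * (2 * σ₁ * (1 + σ₂ * p₂) ^ 2) :=
      mul_le_mul_of_nonneg_left (by nlinarith) hbs
    have h7 : a * ((1 + σ₂ * p₂) ^ 2 * σ₂) ≤ |a| * ((1 + σ₂ * p₂) ^ 2 * σ₂) :=
      mul_le_mul_of_nonneg_right ha1 (by positivity)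
    have h7' : -(|a| * ((1 + σ₂ * p₂) ^ 2 * σ₂)) ≤ a * ((1 + σ₂ * p₂) ^ 2 * σ₂) := by
      nlinarith [mul_le_mul_of_nonneg_right ha2 (by positivity : (0:ℝ) ≤ (1 + σ₂ * p₂) ^ 2 * σ₂)]
    have h6 : -(|b| * (σ₂ * (σ₁ * p₂ * (2 + σ₂ * p₂)))) ≤ b * (σ₂ * (σ₁ * p₂ * (2 + σ₂ * p₂))) := by
      nlinarith [mul_le_mul_of_nonneg_right hb2
        (by positivity : (0:ℝ) ≤ σ₂ * (σ₁ * p₂ * (2 + σ₂ * p₂)))]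
    have h6' : b * (σ₂ * (σ₁ * p₂ * (2 + σ₂ * p₂))) ≤ |b| * (σ₂ * (σ₁ * p₂ * (2 + σ₂ * p₂))) :=
      mul_le_mul_of_nonneg_right hb1 (by positivity)
    constructor <;> nlinarith [key, h7, h7', h6, h6']
  have habs : |(-(p₁ * (a * (1 + σ₂ * p₂) ^ 2 - b * σ₁ * p₂ * (2 + σ₂ * p₂))))|
      = p₁ * |a * (1 + σ₂ * p₂) ^ 2 - b * σ₁ * p₂ * (2 + σ₂ * p₂)| := by
    rw [abs_neg, abs_mul, abs_of_nonneg hp₁]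
  rw [habs]
  have step1 : p₁ * |a * (1 + σ₂ * p₂) ^ 2 - b * σ₁ * p₂ * (2 + σ₂ * p₂)| * (σ₁ * σ₂)
      ≤ p₁ * ((|a| * σ₂ + 2 * |b| * σ₁) * (1 + σ₂ * p₂) ^ 2) * σ₁ := by
    nlinarith [mul_le_mul_of_nonneg_left hA2 (mul_nonneg hp₁ hσ₁.le)]
  have step2 : p₁ * ((|a| * σ₂ + 2 * |b| * σ₁) * (1 + σ₂ * p₂) ^ 2) * σ₁
      ≤ (|a| * σ₂ + 2 * |b| * σ₁) * M₁ * (σ₁ * ((1 + σ₂ * p₂) ^ 2 + p₁ * σ₁)) := by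
    nlinarith [mul_le_mul_of_nonneg_right hM
        (by positivity : (0:ℝ) ≤ (|a| * σ₂ + 2 * |b| * σ₁) * (1 + σ₂ * p₂) ^ 2 * σ₁),
      mul_nonneg (mul_nonneg hN hM₁) (mul_nonneg hp₁ (mul_nonneg hσ₁.le hσ₁.le))]
  linarith

lemma thetaF_abs (hσ₁ : 0 < σ₁) (hσ₂ : 0 < σ₂) (hp₁ : 0 ≤ p₁) (hp₂ : 0 ≤ p₂) (hM : p₁ ≤ M₁) :
    |thetaF r μ₁ μ₂ σ₁ σ₂ p₁ p₂| ≤ (|μ₁ - r| * σ₂ + 2 * |μ₂ - r| * σ₁) * M₁ / (σ₁ * σ₂) := by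
  rw [thetaF]
  exact theta_abs_aux (μ₁ - r) (μ₂ - r) σ₁ σ₂ p₁ p₂ M₁ hσ₁ hσ₂ hp₁ hp₂ hM

private lemma g2_aux (r a b σ₁ σ₂ p₂ θ Θb : ℝ) (hσ₁ : 0 < σ₁) (hσ₂ : 0 < σ₂) (hp₂ : 0 ≤ p₂)
    (hΘ : |θ| ≤ Θb) :
    -((2 * |r| + 2 * ((|a| * σ₂ + |b| * σ₁) * Θb) / σ₂ + σ₁ ^ 2 * Θb ^ 2) * p₂)
      ≤ p₂ * (-2 * r + b ^ 2 * (p₂ / (1 + σ₂ * p₂)) / σ₂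
        - 2 * (a - b * σ₁ * (p₂ / (1 + σ₂ * p₂))) * θ
        - σ₁ * (σ₁ / (1 + σ₂ * p₂)) * θ ^ 2) := by
  have hc : (0:ℝ) < 1 + σ₂ * p₂ := by positivity
  have hΘ0 : 0 ≤ Θb := le_trans (abs_nonneg θ) hΘ
  have hθu : θ ≤ Θb := le_trans (le_abs_self θ) hΘ
  have hθl : -Θb ≤ θ := by linarith [neg_abs_le θ, neg_le_neg hΘ]
  set e := p₂ / (1 + σ₂ * p₂) with he
  have he0 : 0 ≤ e := by positivity
  have he1 : σ₂ * e ≤ 1 := by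
    rw [he, mul_div_assoc', div_le_one hc]; linarith [mul_nonneg hσ₂.le hp₂]
  have hP1 : 0 ≤ b ^ 2 * e / σ₂ := by positivity
  have hbe : (0:ℝ) ≤ σ₁ * (σ₂ * e) := by positivity
  have h2 : -(|b| * (σ₁ * (σ₂ * e))) ≤ b * (σ₁ * (σ₂ * e)) := by
    nlinarith [mul_le_mul_of_nonneg_right (neg_abs_le b) hbe]
  have h2' : b * (σ₁ * (σ₂ * e)) ≤ |b| * (σ₁ * (σ₂ * e)) :=
    mul_le_mul_of_nonneg_right (le_abs_self b) hbe
  have h3 : |b| * σ₁ * (σ₂ * e) ≤ |b| * σ₁ * 1 :=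
    mul_le_mul_of_nonneg_left he1 (mul_nonneg (abs_nonneg b) hσ₁.le)
  have h3' : (0:ℝ) ≤ |b| * σ₁ * (σ₂ * e) := by positivity
  have h1 : a * σ₂ ≤ |a| * σ₂ := mul_le_mul_of_nonneg_right (le_abs_self a) hσ₂.le
  have h1' : -(|a| * σ₂) ≤ a * σ₂ := by
    nlinarith [mul_le_mul_of_nonneg_right (neg_abs_le a) hσ₂.le]
  have hq1 : σ₂ * (a - b * σ₁ * e) ≤ |a| * σ₂ + |b| * σ₁ := by nlinarith
  have hq2 : -(|a| * σ₂ + |b| * σ₁) ≤ σ₂ * (a - b * σ₁ * e) := by nlinarith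
  have hprod : σ₂ * (a - b * σ₁ * e) * θ ≤ (|a| * σ₂ + |b| * σ₁) * Θb := by
    nlinarith [mul_nonneg (by linarith : (0:ℝ) ≤ |a| * σ₂ + |b| * σ₁ - σ₂ * (a - b * σ₁ * e))
        (by linarith : (0:ℝ) ≤ Θb + θ),
      mul_nonneg (by linarith : (0:ℝ) ≤ |a| * σ₂ + |b| * σ₁ + σ₂ * (a - b * σ₁ * e))
        (by linarith : (0:ℝ) ≤ Θb - θ)]
  have piece2 : -(2 * ((|a| * σ₂ + |b| * σ₁) * Θb) / σ₂) ≤ -(2 * (a - b * σ₁ * e) * θ) := by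
    rw [neg_le_neg_iff, le_div_iff₀ hσ₂]
    linarith
  have ht1 : σ₁ / (1 + σ₂ * p₂) ≤ σ₁ := div_le_self hσ₁.le (by linarith [mul_nonneg hσ₂.le hp₂])
  have ht0 : 0 ≤ σ₁ / (1 + σ₂ * p₂) := by positivity
  have hθ2 : θ ^ 2 ≤ Θb ^ 2 := by nlinarith
  have piece3 : σ₁ * (σ₁ / (1 + σ₂ * p₂)) * θ ^ 2 ≤ σ₁ ^ 2 * Θb ^ 2 := by
    nlinarith [mul_le_mul (mul_le_mul_of_nonneg_left ht1 hσ₁.le) hθ2 (sq_nonneg θ)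
      (by positivity : (0:ℝ) ≤ σ₁ * σ₁)]
  have hX : -(2 * |r| + 2 * ((|a| * σ₂ + |b| * σ₁) * Θb) / σ₂ + σ₁ ^ 2 * Θb ^ 2)
      ≤ -2 * r + b ^ 2 * e / σ₂ - 2 * (a - b * σ₁ * e) * θ
        - σ₁ * (σ₁ / (1 + σ₂ * p₂)) * θ ^ 2 := by
    linarith [le_abs_self r, neg_abs_le r]
  calc -((2 * |r| + 2 * ((|a| * σ₂ + |b| * σ₁) * Θb) / σ₂ + σ₁ ^ 2 * Θb ^ 2) * p₂)
      = p₂ * -(2 * |r| + 2 * ((|a| * σ₂ + |b| * σ₁) * Θb) / σ₂ + σ₁ ^ 2 * Θb ^ 2) := by ring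
    _ ≤ p₂ * (-2 * r + b ^ 2 * e / σ₂ - 2 * (a - b * σ₁ * e) * θ
          - σ₁ * (σ₁ / (1 + σ₂ * p₂)) * θ ^ 2) := mul_le_mul_of_nonneg_left hX hp₂

lemma G2_ge (hσ₁ : 0 < σ₁) (hσ₂ : 0 < σ₂) (hp₂ : 0 ≤ p₂)
    (hΘ : |thetaF r μ₁ μ₂ σ₁ σ₂ p₁ p₂| ≤ Θb) :
    -((2 * |r| + 2 * ((|μ₁ - r| * σ₂ + |μ₂ - r| * σ₁) * Θb) / σ₂ + σ₁ ^ 2 * Θb ^ 2) * p₂)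
      ≤ G2 r μ₁ μ₂ σ₁ σ₂ p₁ p₂ :=
  g2_aux r (μ₁ - r) (μ₂ - r) σ₁ σ₂ p₂ _ Θb hσ₁ hσ₂ hp₂ hΘ

/-! ### Smoothness, clamping, Lipschitz bounds -/

def Gfun (r μ₁ μ₂ σ₁ σ₂ : ℝ) (p : ℝ × ℝ) : ℝ × ℝ :=
  (G1 r μ₁ μ₂ σ₁ σ₂ p.1 p.2, G2 r μ₁ μ₂ σ₁ σ₂ p.1 p.2)

def Uset (σ₁ σ₂ : ℝ) : Set (ℝ × ℝ) := Ioi (-(1/(8*σ₁))) ×ˢ Ioi (-(1/(2*σ₂)))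

lemma Uset_open : IsOpen (Uset σ₁ σ₂) := isOpen_Ioi.prod isOpen_Ioi

lemma mem_Uset_of_nonneg (hσ₁ : 0 < σ₁) (hσ₂ : 0 < σ₂) {p : ℝ × ℝ}
    (h1 : 0 ≤ p.1) (h2 : 0 ≤ p.2) : p ∈ Uset σ₁ σ₂ := by
  constructor <;> simp only [mem_Ioi] <;>
    nlinarith [one_div_pos.2 (by positivity : (0:ℝ) < 8*σ₁),
      one_div_pos.2 (by positivity : (0:ℝ) < 2*σ₂)]

lemma c_pos_U (hσ₁ : 0 < σ₁) (hσ₂ : 0 < σ₂) {p : ℝ × ℝ} (hp : p ∈ Uset σ₁ σ₂) :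
    0 < 1 + σ₂ * p.2 := by
  have h2 : -(1/(2*σ₂)) < p.2 := hp.2
  have : σ₂ * (-(1/(2*σ₂))) ≤ σ₂ * p.2 := by nlinarith
  have hh : σ₂ * (1/(2*σ₂)) = 1/2 := by field_simp
  nlinarith

lemma K_pos_U (hσ₁ : 0 < σ₁) (hσ₂ : 0 < σ₂) {p : ℝ × ℝ} (hp : p ∈ Uset σ₁ σ₂) :
    0 < (1 + σ₂ * p.2) ^ 2 + p.1 * σ₁ := by
  have h1 : -(1/(8*σ₁)) < p.1 := hp.1
  have h2 : -(1/(2*σ₂)) < p.2 := hp.2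
  have hc : 0 < 1 + σ₂ * p.2 := c_pos_U hσ₁ hσ₂ hp
  have hc2 : 1/2 < 1 + σ₂ * p.2 := by
    have hh : σ₂ * (1/(2*σ₂)) = 1/2 := by field_simp
    nlinarith
  have hp1 : p.1 * σ₁ > -(1/8) := by
    have hh : (1/(8*σ₁)) * σ₁ = 1/8 := by field_simp
    nlinarith
  nlinarith

lemma Gfun_contDiffOn (hσ₁ : 0 < σ₁) (hσ₂ : 0 < σ₂) :
    ContDiffOn ℝ 1 (Gfun r μ₁ μ₂ σ₁ σ₂) (Uset σ₁ σ₂) := by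
  have hcne : ∀ p ∈ Uset σ₁ σ₂, 1 + σ₂ * p.2 ≠ 0 :=
    fun p hp => ne_of_gt (c_pos_U hσ₁ hσ₂ hp)
  have hKne : ∀ p ∈ Uset σ₁ σ₂, σ₁ * ((1 + σ₂ * p.2) ^ 2 + p.1 * σ₁) ≠ 0 :=
    fun p hp => ne_of_gt (mul_pos hσ₁ (K_pos_U hσ₁ hσ₂ hp))
  have hth : ContDiffOn ℝ 1 (fun p : ℝ × ℝ => thetaF r μ₁ μ₂ σ₁ σ₂ p.1 p.2) (Uset σ₁ σ₂) := by
    unfold thetaF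
    exact ContDiffOn.div (by fun_prop) (by fun_prop) hKne
  have he : ContDiffOn ℝ 1 (fun p : ℝ × ℝ => p.2 / (1 + σ₂ * p.2)) (Uset σ₁ σ₂) :=
    ContDiffOn.div (by fun_prop) (by fun_prop) hcne
  have ht : ContDiffOn ℝ 1 (fun p : ℝ × ℝ => σ₁ / (1 + σ₂ * p.2)) (Uset σ₁ σ₂) :=
    ContDiffOn.div (by fun_prop) (by fun_prop) hcne
  apply ContDiffOn.prodMk
  · unfold G1
    apply ContDiffOn.add
    · apply ContDiffOn.mul (by fun_prop)
      apply ContDiffOn.add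
      · apply ContDiffOn.sub (by fun_prop)
        exact ContDiffOn.div_const (ContDiffOn.mul contDiffOn_const he) σ₂
      · exact ContDiffOn.mul contDiffOn_const (he.pow 2)
    · exact ContDiffOn.mul (hth.pow 2) (ContDiffOn.add contDiffOn_const
        (ContDiffOn.mul (by fun_prop) (ht.pow 2)))
  · unfold G2
    apply ContDiffOn.mul (by fun_prop)
    apply ContDiffOn.sub
    apply ContDiffOn.sub
    apply ContDiffOn.add (by fun_prop)
    · exact ContDiffOn.div_const (ContDiffOn.mul contDiffOn_const he) σ₂
    · exact ContDiffOn.mul (ContDiffOn.mul contDiffOn_const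
        (ContDiffOn.sub contDiffOn_const (ContDiffOn.mul contDiffOn_const he))) hth
    · exact ContDiffOn.mul (ContDiffOn.mul contDiffOn_const ht) (hth.pow 2)

def clf (M x : ℝ) : ℝ := min (max x 0) M

def projF (M : ℝ) (p : ℝ × ℝ) : ℝ × ℝ := (clf M p.1, clf M p.2)

def Sbox (M : ℝ) : Set (ℝ × ℝ) := Icc (0:ℝ) M ×ˢ Icc (0:ℝ) M

lemma clf_mem (hM : 0 ≤ M) (x : ℝ) : clf M x ∈ Icc (0:ℝ) M :=
  ⟨le_min (le_max_right x 0) hM, min_le_right _ _⟩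

lemma clf_eq {x : ℝ} (h0 : 0 ≤ x) (hM : x ≤ M) : clf M x = x := by
  rw [clf, max_eq_left h0, min_eq_left hM]

lemma clf_le_self {x : ℝ} (h0 : 0 ≤ x) : clf M x ≤ x :=
  le_trans (min_le_left _ _) (by rw [max_eq_left h0])

lemma clf_zero (hM : 0 ≤ M) : clf M 0 = 0 := clf_eq le_rfl hM

lemma clf_lipschitz (M : ℝ) : LipschitzWith 1 (clf M) :=
  (LipschitzWith.id.max_const 0).min_const M

lemma projF_lipschitz (M : ℝ) : LipschitzWith 1 (projF M) := by
  have h1 : LipschitzWith 1 (fun p : ℝ × ℝ => clf M p.1) :=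
    by simpa [Function.comp_def] using (clf_lipschitz M).comp LipschitzWith.prod_fst
  have h2 : LipschitzWith 1 (fun p : ℝ × ℝ => clf M p.2) :=
    by simpa [Function.comp_def] using (clf_lipschitz M).comp LipschitzWith.prod_snd
  have h3 := h1.prodMk h2
  simp only [max_self] at h3
  exact h3

lemma projF_mem (hM : 0 ≤ M) (p : ℝ × ℝ) : projF M p ∈ Sbox M :=
  ⟨clf_mem hM p.1, clf_mem hM p.2⟩

lemma Sbox_subset_Uset (hσ₁ : 0 < σ₁) (hσ₂ : 0 < σ₂) (M : ℝ) :
    Sbox M ⊆ Uset σ₁ σ₂ :=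
  fun p hp => mem_Uset_of_nonneg hσ₁ hσ₂ hp.1.1 hp.2.1

lemma Gfun_lipschitzOn (hσ₁ : 0 < σ₁) (hσ₂ : 0 < σ₂) (M : ℝ) :
    ∃ K : ℝ≥0, LipschitzOnWith K (Gfun r μ₁ μ₂ σ₁ σ₂) (Sbox M) := by
  have hG := Gfun_contDiffOn (r := r) (μ₁ := μ₁) (μ₂ := μ₂) hσ₁ hσ₂
  have hsub := Sbox_subset_Uset hσ₁ hσ₂ (M := M)
  have hScomp : IsCompact (Sbox M) := isCompact_Icc.prod isCompact_Icc
  have hSconv : Convex ℝ (Sbox M) := (convex_Icc _ _).prod (convex_Icc _ _)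
  have hd : ∀ x ∈ Sbox M, DifferentiableAt ℝ (Gfun r μ₁ μ₂ σ₁ σ₂) x := fun x hx =>
    (hG.contDiffAt ((Uset_open).mem_nhds (hsub hx))).differentiableAt one_ne_zero
  have hfc : ContinuousOn (fderiv ℝ (Gfun r μ₁ μ₂ σ₁ σ₂)) (Uset σ₁ σ₂) :=
    hG.continuousOn_fderiv_of_isOpen Uset_open le_rfl
  obtain ⟨C, hC⟩ := hScomp.exists_bound_of_continuousOn (hfc.mono hsub)
  refine ⟨C.toNNReal, hSconv.lipschitzOnWith_of_nnnorm_fderiv_le hd fun x hx => ?_⟩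
  rw [← norm_toNNReal]
  exact Real.toNNReal_mono (hC x hx)

lemma Gfun_bounded (hσ₁ : 0 < σ₁) (hσ₂ : 0 < σ₂) (M : ℝ) :
    ∃ C : ℝ, 0 ≤ C ∧ ∀ p ∈ Sbox M, ‖Gfun r μ₁ μ₂ σ₁ σ₂ p‖ ≤ C := by
  have hG := Gfun_contDiffOn (r := r) (μ₁ := μ₁) (μ₂ := μ₂) hσ₁ hσ₂
  have hScomp : IsCompact (Sbox M) := isCompact_Icc.prod isCompact_Icc
  obtain ⟨C, hC⟩ := hScomp.exists_bound_of_continuousOn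
    (hG.continuousOn.mono (Sbox_subset_Uset hσ₁ hσ₂ M))
  exact ⟨max C 0, le_max_right _ _, fun p hp => le_trans (hC p hp) (le_max_left _ _)⟩

def Ffun (r μ₁ μ₂ σ₁ σ₂ M : ℝ) (p : ℝ × ℝ) : ℝ × ℝ :=
  Gfun r μ₁ μ₂ σ₁ σ₂ (projF M p)

lemma Ffun_lipschitz (hσ₁ : 0 < σ₁) (hσ₂ : 0 < σ₂) (hM : 0 ≤ M) :
    ∃ K : ℝ≥0, LipschitzWith K (Ffun r μ₁ μ₂ σ₁ σ₂ M) := by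
  obtain ⟨K, hK⟩ := Gfun_lipschitzOn (r := r) (μ₁ := μ₁) (μ₂ := μ₂) hσ₁ hσ₂ M
  refine ⟨K * 1, ?_⟩
  rw [← lipschitzOnWith_univ]
  exact hK.comp ((projF_lipschitz M).lipschitzOnWith (s := univ)) (fun p _ => projF_mem hM p)

lemma Ffun_bounded (hσ₁ : 0 < σ₁) (hσ₂ : 0 < σ₂) (hM : 0 ≤ M) :
    ∃ C : ℝ, 0 ≤ C ∧ ∀ p, ‖Ffun r μ₁ μ₂ σ₁ σ₂ M p‖ ≤ C := by
  obtain ⟨C, hC0, hC⟩ := Gfun_bounded (r := r) (μ₁ := μ₁) (μ₂ := μ₂) hσ₁ hσ₂ M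
  exact ⟨C, hC0, fun p => hC _ (projF_mem hM p)⟩

lemma G1_zero (r μ₁ μ₂ σ₁ σ₂ p₂ : ℝ) : G1 r μ₁ μ₂ σ₁ σ₂ 0 p₂ = 0 := by
  simp [G1, thetaF]

lemma G2_zero (r μ₁ μ₂ σ₁ σ₂ p₁ : ℝ) : G2 r μ₁ μ₂ σ₁ σ₂ p₁ 0 = 0 := by
  simp [G2]

lemma Ffun_fst (p : ℝ × ℝ) :
    (Ffun r μ₁ μ₂ σ₁ σ₂ M p).1 = G1 r μ₁ μ₂ σ₁ σ₂ (clf M p.1) (clf M p.2) := rfl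

lemma Ffun_snd (p : ℝ × ℝ) :
    (Ffun r μ₁ μ₂ σ₁ σ₂ M p).2 = G2 r μ₁ μ₂ σ₁ σ₂ (clf M p.1) (clf M p.2) := rfl

lemma Ffun_snd_zero (hM : 0 ≤ M) (x : ℝ) : (Ffun r μ₁ μ₂ σ₁ σ₂ M (x, 0)).2 = 0 := by
  rw [Ffun_snd]
  show G2 r μ₁ μ₂ σ₁ σ₂ (clf M x) (clf M 0) = 0
  rw [clf_zero hM, G2_zero]

lemma Ffun_fst_zero (hM : 0 ≤ M) (x : ℝ) : (Ffun r μ₁ μ₂ σ₁ σ₂ M (0, x)).1 = 0 := by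
  rw [Ffun_fst]
  show G1 r μ₁ μ₂ σ₁ σ₂ (clf M 0) (clf M x) = 0
  rw [clf_zero hM, G1_zero]

lemma Ffun_eq (hσ₁ : 0 < σ₁) (hσ₂ : 0 < σ₂) {p : ℝ × ℝ}
    (h1 : 0 ≤ p.1) (h2 : 0 ≤ p.2) (hm1 : p.1 ≤ M) (hm2 : p.2 ≤ M) :
    Ffun r μ₁ μ₂ σ₁ σ₂ M p
      = (assetRhs1 r μ₁ μ₂ σ₁ σ₂ p.1 p.2, assetRhs2 r μ₁ μ₂ σ₁ σ₂ p.1 p.2) := by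
  have e1 : clf M p.1 = p.1 := clf_eq h1 hm1
  have e2 : clf M p.2 = p.2 := clf_eq h2 hm2
  rw [Ffun, Gfun, projF, e1, e2]
  exact Prod.ext (rhs1_eq hσ₁ hσ₂ h1 h2).symm (rhs2_eq hσ₁ hσ₂ h1 h2).symm

/-! ### ODE toolbox -/

lemma exists_global {E : Type*} [NormedAddCommGroup E] [NormedSpace ℝ E] [CompleteSpace E]
    (F : E → E) (K : ℝ≥0) (hF : LipschitzWith K F) (C : ℝ)
    (hC : ∀ p, ‖F p‖ ≤ C) {T t₀ : ℝ} (ht₀ : t₀ ∈ Icc (0:ℝ) T) (x₀ : E) :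
    ∃ f : ℝ → E, f t₀ = x₀ ∧
      ∀ t ∈ Icc (0:ℝ) T, HasDerivWithinAt f (F (f t)) (Icc (0:ℝ) T) t := by
  have hC0 : 0 ≤ C := le_trans (norm_nonneg _) (hC x₀)
  have hpl : IsPicardLindelof (fun _ : ℝ => F) (tmin := 0) (tmax := T) ⟨t₀, ht₀⟩ x₀
      (C * T).toNNReal 0 C.toNNReal K :=
    { lipschitzOnWith := fun t _ => hF.lipschitzOnWith
      continuousOn := fun x _ => continuousOn_const
      norm_le := fun t _ x _ => le_trans (hC x) (Real.le_coe_toNNReal C)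
      mul_max_le := by
          have h1 : max (T - t₀) (t₀ - 0) ≤ T := by
            apply max_le <;> linarith [ht₀.1, ht₀.2]
          have hT0 : 0 ≤ T := le_trans ht₀.1 ht₀.2
          simp only [Real.coe_toNNReal _ hC0, Real.coe_toNNReal _ (mul_nonneg hC0 hT0),
            NNReal.coe_zero, sub_zero]
          rw [sub_zero] at h1
          nlinarith [mul_le_mul_of_nonneg_left h1 hC0] }
  obtain ⟨f, hf0, hf⟩ := hpl.exists_eq_forall_mem_Icc_hasDerivWithinAt₀
  exact ⟨f, hf0, hf⟩

lemma hdw_fst {z : ℝ → ℝ × ℝ} {d : ℝ × ℝ} {s : Set ℝ} {x : ℝ}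
    (h : HasDerivWithinAt z d s x) : HasDerivWithinAt (fun t => (z t).1) d.1 s x := by
  simpa [Function.comp_def] using ((ContinuousLinearMap.fst ℝ ℝ ℝ).hasFDerivAt).comp_hasDerivWithinAt x h

lemma hdw_snd {z : ℝ → ℝ × ℝ} {d : ℝ × ℝ} {s : Set ℝ} {x : ℝ}
    (h : HasDerivWithinAt z d s x) : HasDerivWithinAt (fun t => (z t).2) d.2 s x := by
  simpa [Function.comp_def] using ((ContinuousLinearMap.snd ℝ ℝ ℝ).hasFDerivAt).comp_hasDerivWithinAt x h

lemma gron_back {T K δ : ℝ} (hK : 0 ≤ K) {v d : ℝ → ℝ}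
    (hv : ∀ s ∈ Icc (0:ℝ) T, HasDerivWithinAt v (d s) (Icc (0:ℝ) T) s)
    (hδ : v T ≤ δ)
    (hb : ∀ s ∈ Icc (0:ℝ) T, -(d s) ≤ K * v s) :
    ∀ s ∈ Icc (0:ℝ) T, v s ≤ δ * Real.exp (K * (T - s)) := by
  intro s hs
  have hT : 0 ≤ T := le_trans hs.1 hs.2
  have hcont : ContinuousOn v (Icc 0 T) := fun u hu => (hv u hu).continuousWithinAt
  set g : ℝ → ℝ := fun u => v (T - u) with hgdef
  have hgcont : ContinuousOn g (Icc 0 T) := by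
    apply hcont.comp (Continuous.continuousOn (by continuity))
    intro u hu
    exact ⟨by linarith [hu.1, hu.2], by linarith [hu.1, hu.2]⟩
  have hg' : ∀ u ∈ Ico (0:ℝ) T, HasDerivWithinAt g (-(d (T - u))) (Ici u) u := by
    intro u hu
    have hTu : T - u ∈ Ioc (0:ℝ) T := ⟨by linarith [hu.2], by linarith [hu.1]⟩
    have h1 : HasDerivWithinAt v (d (T - u)) (Iic (T - u)) (T - u) :=
      (hv _ ⟨hTu.1.le, hTu.2⟩).mono_of_mem_nhdsWithin (Icc_mem_nhdsLE_of_mem hTu)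
    have h2 : HasDerivWithinAt (fun w : ℝ => T - w) (-1 : ℝ) (Ici u) u := by
      simpa using ((hasDerivAt_id u).const_sub T).hasDerivWithinAt (s := Ici u)
    have h3 : MapsTo (fun w : ℝ => T - w) (Ici u) (Iic (T - u)) := fun w hw => by
      simp only [mem_Iic]; simp only [mem_Ici] at hw; linarith
    have := HasDerivWithinAt.comp u h1 h2 h3
    simpa [mul_comm, Function.comp_def] using this
  have key := le_gronwallBound_of_liminf_deriv_right_le (f := g)
    (f' := fun u => -(d (T - u))) (δ := δ) (K := K) (ε := 0) (a := 0) (b := T)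
    hgcont
    (fun x hx r hr => by
      have := (hg' x hx).liminf_right_slope_le hr
      apply this.mono
      intro z hz
      rwa [slope_def_field, div_eq_inv_mul] at hz)
    (by show v (T - 0) ≤ δ; rw [sub_zero]; exact hδ)
    (fun x hx => by
      have hTx : T - x ∈ Icc (0:ℝ) T := ⟨by linarith [hx.2], by linarith [hx.1]⟩
      have := hb _ hTx
      simpa using this)
  have hkey := key (T - s) ⟨by linarith [hs.2], by linarith [hs.1]⟩
  rw [gronwallBound_ε0] at hkey
  have hgs : g (T - s) = v s := by rw [hgdef]; simp [sub_sub_cancel]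
  rw [hgs, sub_zero] at hkey
  exact hkey

end AERE

open AERE Set NNReal in
/-- Global well-posedness of the asset-management scalar equilibrium Riccati equation:
there is exactly one pair of nonnegative continuously differentiable solutions on
`[0,T]`. -/
theorem stmt_18 (T r μ₁ μ₂ σ₁ σ₂ : ℝ) (hT : 0 < T) (hσ₁ : 0 < σ₁) (hσ₂ : 0 < σ₂) :
    ∃ P₁ P₂ : ℝ → ℝ, IsAssetERESolution T r μ₁ μ₂ σ₁ σ₂ P₁ P₂ ∧
      ∀ Q₁ Q₂ : ℝ → ℝ, IsAssetERESolution T r μ₁ μ₂ σ₁ σ₂ Q₁ Q₂ →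
        ∀ s ∈ Set.Icc (0 : ℝ) T, Q₁ s = P₁ s ∧ Q₂ s = P₂ s := by
  classical
  have habs : (0:ℝ) ≤ |r| := abs_nonneg r
  set M1 := Real.exp (2 * |r| * T) with hM1def
  have hM10 : 0 < M1 := Real.exp_pos _
  set Θb := (|μ₁ - r| * σ₂ + 2 * |μ₂ - r| * σ₁) * M1 / (σ₁ * σ₂) with hΘbdef
  have hΘb0 : 0 ≤ Θb := by positivity
  set K2 := 2 * |r| + 2 * ((|μ₁ - r| * σ₂ + |μ₂ - r| * σ₁) * Θb) / σ₂ + σ₁ ^ 2 * Θb ^ 2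
    with hK2def
  have hK20 : 0 ≤ K2 := by positivity
  set M2 := Real.exp (K2*T) with hM2def
  have hM20 : 0 < M2 := Real.exp_pos _
  set M := max M1 M2 + 1 with hMdef
  have hM1M : M1 ≤ M := by
    have := le_max_left M1 M2; rw [hMdef]; linarith
  have hM2M : M2 ≤ M := by
    have := le_max_right M1 M2; rw [hMdef]; linarith
  have hM0 : 0 ≤ M := by linarith
  obtain ⟨K0, hK0⟩ := Ffun_lipschitz (r := r) (μ₁ := μ₁) (μ₂ := μ₂) hσ₁ hσ₂ hM0
  obtain ⟨C0, hC00, hC0⟩ := Ffun_bounded (r := r) (μ₁ := μ₁) (μ₂ := μ₂) hσ₁ hσ₂ hM0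
  obtain ⟨z, hzT, hz⟩ := exists_global (Ffun r μ₁ μ₂ σ₁ σ₂ M) K0 hK0 C0 hC0
    (T := T) (t₀ := T) ⟨hT.le, le_rfl⟩ ((1:ℝ), (1:ℝ))
  have hzc : ContinuousOn z (Set.Icc 0 T) := fun u hu => (hz u hu).continuousWithinAt
  have hz1T : (z T).1 = 1 := by rw [hzT]
  have hz2T : (z T).2 = 1 := by rw [hzT]
  -- a uniqueness principle forward from any time s₁
  have huniq : ∀ (w : ℝ → ℝ × ℝ) (s₁ : ℝ), s₁ ∈ Set.Icc (0:ℝ) T →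
      (∀ t ∈ Set.Icc (0:ℝ) T,
        HasDerivWithinAt w (Ffun r μ₁ μ₂ σ₁ σ₂ M (w t)) (Set.Icc (0:ℝ) T) t) →
      z s₁ = w s₁ → z T = w T := by
    intro w s₁ hs₁ hw heq
    have hKt : ∀ t : ℝ, LipschitzWith K0 (fun p => Ffun r μ₁ μ₂ σ₁ σ₂ M p) := fun _ => hK0
    have hder : ∀ (u : ℝ → ℝ × ℝ),
        (∀ t ∈ Set.Icc (0:ℝ) T,
          HasDerivWithinAt u (Ffun r μ₁ μ₂ σ₁ σ₂ M (u t)) (Set.Icc (0:ℝ) T) t) →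
        ∀ t ∈ Set.Ico s₁ T, HasDerivWithinAt u (Ffun r μ₁ μ₂ σ₁ σ₂ M (u t)) (Set.Ici t) t := by
      intro u hu t ht
      exact (hu t ⟨le_trans hs₁.1 ht.1, ht.2.le⟩).mono_of_mem_nhdsWithin
        (Icc_mem_nhdsGE_of_mem ⟨le_trans hs₁.1 ht.1, ht.2⟩)
    have hEq := ODE_solution_unique (v := fun _ p => Ffun r μ₁ μ₂ σ₁ σ₂ M p) hKt
      (hzc.mono (Set.Icc_subset_Icc hs₁.1 le_rfl)) (hder z hz)
      (ContinuousOn.mono (fun u hu => (hw u hu).continuousWithinAt)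
        (Set.Icc_subset_Icc hs₁.1 le_rfl)) (hder w hw) heq
    exact hEq ⟨hs₁.2, le_rfl⟩
  -- nonnegativity of the second component
  have hnn2 : ∀ s ∈ Set.Icc (0:ℝ) T, 0 ≤ (z s).2 := by
    by_contra hcon
    push_neg at hcon
    obtain ⟨s₀, hs₀, hneg⟩ := hcon
    have hconts : ContinuousOn (fun s => (z s).2) (Set.Icc s₀ T) :=
      (continuous_snd.comp_continuousOn hzc).mono (Set.Icc_subset_Icc hs₀.1 le_rfl)
    have h0mem : (0:ℝ) ∈ Set.Icc ((z s₀).2) ((z T).2) := ⟨hneg.le, by rw [hz2T]; norm_num⟩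
    obtain ⟨s₁, hs₁mem, hs₁⟩ := intermediate_value_Icc hs₀.2 hconts h0mem
    have hs₁Icc : s₁ ∈ Set.Icc (0:ℝ) T := ⟨le_trans hs₀.1 hs₁mem.1, hs₁mem.2⟩
    have hg1lip : LipschitzWith (1 * (K0 * 1))
        (fun x : ℝ => (Ffun r μ₁ μ₂ σ₁ σ₂ M (x, 0)).1) :=
      LipschitzWith.prod_fst.comp (hK0.comp (LipschitzWith.prodMk_right 0))
    obtain ⟨y, hy1, hy⟩ := exists_global (fun x : ℝ => (Ffun r μ₁ μ₂ σ₁ σ₂ M (x, 0)).1)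
      _ hg1lip C0 (fun x => le_trans (norm_fst_le _) (hC0 _)) hs₁Icc ((z s₁).1)
    have hw : ∀ t ∈ Set.Icc (0:ℝ) T,
        HasDerivWithinAt (fun s => (y s, (0:ℝ)))
          (Ffun r μ₁ μ₂ σ₁ σ₂ M (y t, (0:ℝ))) (Set.Icc (0:ℝ) T) t := by
      intro t ht
      have hp := (hy t ht).prodMk
        (hasDerivWithinAt_const (𝕜 := ℝ) t (Set.Icc (0:ℝ) T) (0:ℝ))
      have h2 : Ffun r μ₁ μ₂ σ₁ σ₂ M (y t, (0:ℝ))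
          = ((Ffun r μ₁ μ₂ σ₁ σ₂ M (y t, 0)).1, (0:ℝ)) :=
        Prod.ext rfl (Ffun_snd_zero hM0 (y t))
      rw [h2]
      exact hp
    have heq : z s₁ = (y s₁, (0:ℝ)) := Prod.ext (by rw [hy1]) (by exact hs₁)
    have hTT := huniq (fun s => (y s, (0:ℝ))) s₁ hs₁Icc hw heq
    have : (1:ℝ) = 0 := by rw [← hz2T, hTT]
    norm_num at this
  -- nonnegativity of the first component
  have hnn1 : ∀ s ∈ Set.Icc (0:ℝ) T, 0 ≤ (z s).1 := by
    by_contra hcon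
    push_neg at hcon
    obtain ⟨s₀, hs₀, hneg⟩ := hcon
    have hconts : ContinuousOn (fun s => (z s).1) (Set.Icc s₀ T) :=
      (continuous_fst.comp_continuousOn hzc).mono (Set.Icc_subset_Icc hs₀.1 le_rfl)
    have h0mem : (0:ℝ) ∈ Set.Icc ((z s₀).1) ((z T).1) := ⟨hneg.le, by rw [hz1T]; norm_num⟩
    obtain ⟨s₁, hs₁mem, hs₁⟩ := intermediate_value_Icc hs₀.2 hconts h0mem
    have hs₁Icc : s₁ ∈ Set.Icc (0:ℝ) T := ⟨le_trans hs₀.1 hs₁mem.1, hs₁mem.2⟩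
    have hg2lip : LipschitzWith (1 * (K0 * 1))
        (fun x : ℝ => (Ffun r μ₁ μ₂ σ₁ σ₂ M (0, x)).2) :=
      LipschitzWith.prod_snd.comp (hK0.comp (LipschitzWith.prodMk_left 0))
    obtain ⟨y, hy1, hy⟩ := exists_global (fun x : ℝ => (Ffun r μ₁ μ₂ σ₁ σ₂ M (0, x)).2)
      _ hg2lip C0 (fun x => le_trans (norm_snd_le _) (hC0 _)) hs₁Icc ((z s₁).2)
    have hw : ∀ t ∈ Set.Icc (0:ℝ) T,
        HasDerivWithinAt (fun s => ((0:ℝ), y s))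
          (Ffun r μ₁ μ₂ σ₁ σ₂ M ((0:ℝ), y t)) (Set.Icc (0:ℝ) T) t := by
      intro t ht
      have hp := (hasDerivWithinAt_const (𝕜 := ℝ) t (Set.Icc (0:ℝ) T) (0:ℝ)).prodMk (hy t ht)
      have h2 : Ffun r μ₁ μ₂ σ₁ σ₂ M ((0:ℝ), y t)
          = ((0:ℝ), (Ffun r μ₁ μ₂ σ₁ σ₂ M (0, y t)).2) :=
        Prod.ext (Ffun_fst_zero hM0 (y t)) rfl
      rw [h2]
      exact hp
    have heq : z s₁ = ((0:ℝ), y s₁) := Prod.ext (by exact hs₁) (by rw [hy1])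
    have hTT := huniq (fun s => ((0:ℝ), y s)) s₁ hs₁Icc hw heq
    have : (1:ℝ) = 0 := by rw [← hz1T, hTT]
    norm_num at this
  -- upper bound on the first component
  have hb1 : ∀ s ∈ Set.Icc (0:ℝ) T, (z s).1 ≤ M1 := by
    have hg := gron_back (T := T) (K := 2 * |r|) (δ := 1) (by positivity)
      (v := fun s => (z s).1) (d := fun s => (Ffun r μ₁ μ₂ σ₁ σ₂ M (z s)).1)
      (fun s hs => hdw_fst (hz s hs)) (by show (z T).1 ≤ 1; rw [hz1T])
      (fun s hs => by
        show -(Ffun r μ₁ μ₂ σ₁ σ₂ M (z s)).1 ≤ 2 * |r| * (z s).1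
        have h1 := Ffun_fst (r := r) (μ₁ := μ₁) (μ₂ := μ₂) (σ₁ := σ₁) (σ₂ := σ₂) (M := M) (z s)
        have hc1 := clf_mem (M := M) hM0 ((z s).1)
        have hc2 := clf_mem (M := M) hM0 ((z s).2)
        have hG := G1_ge (r := r) (μ₁ := μ₁) (μ₂ := μ₂) hσ₁ hσ₂ hc1.1 hc2.1
        have hle : clf M ((z s).1) ≤ (z s).1 := clf_le_self (hnn1 s hs)
        have h4 : 2 * |r| * clf M ((z s).1) ≤ 2 * |r| * (z s).1 :=
          mul_le_mul_of_nonneg_left hle (by positivity)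
        rw [h1]; linarith)
    intro s hs
    calc (z s).1 ≤ 1 * Real.exp (2 * |r| * (T - s)) := hg s hs
      _ ≤ M1 := by
          rw [one_mul, hM1def]
          exact Real.exp_le_exp.2 (by nlinarith [hs.1, hs.2])
  -- upper bound on the second component
  have hb2 : ∀ s ∈ Set.Icc (0:ℝ) T, (z s).2 ≤ M2 := by
    have hg := gron_back (T := T) (K := K2) (δ := 1) hK20
      (v := fun s => (z s).2) (d := fun s => (Ffun r μ₁ μ₂ σ₁ σ₂ M (z s)).2)
      (fun s hs => hdw_snd (hz s hs)) (by show (z T).2 ≤ 1; rw [hz2T])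
      (fun s hs => by
        show -(Ffun r μ₁ μ₂ σ₁ σ₂ M (z s)).2 ≤ K2 * (z s).2
        have h1 := Ffun_snd (r := r) (μ₁ := μ₁) (μ₂ := μ₂) (σ₁ := σ₁) (σ₂ := σ₂) (M := M) (z s)
        have hc1 := clf_mem (M := M) hM0 ((z s).1)
        have hc2 := clf_mem (M := M) hM0 ((z s).2)
        have hcM1 : clf M ((z s).1) ≤ M1 :=
          le_trans (clf_le_self (hnn1 s hs)) (hb1 s hs)
        have hθ := thetaF_abs (r := r) (μ₁ := μ₁) (μ₂ := μ₂) hσ₁ hσ₂ hc1.1 hc2.1 hcM1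
        rw [← hΘbdef] at hθ
        have hG := G2_ge (r := r) (μ₁ := μ₁) (μ₂ := μ₂) hσ₁ hσ₂ hc2.1 hθ
        rw [← hK2def] at hG
        have hle : clf M ((z s).2) ≤ (z s).2 := clf_le_self (hnn2 s hs)
        have h4 : K2 * clf M ((z s).2) ≤ K2 * (z s).2 :=
          mul_le_mul_of_nonneg_left hle hK20
        rw [h1]; linarith)
    intro s hs
    calc (z s).2 ≤ 1 * Real.exp (K2 * (T - s)) := hg s hs
      _ ≤ M2 := by
          rw [one_mul, hM2def]
          exact Real.exp_le_exp.2 (by nlinarith [hs.1, hs.2])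
  -- the solution field coincides with the original one along z
  have hzF : ∀ s ∈ Set.Icc (0:ℝ) T, Ffun r μ₁ μ₂ σ₁ σ₂ M (z s)
      = (assetRhs1 r μ₁ μ₂ σ₁ σ₂ ((z s).1) ((z s).2),
         assetRhs2 r μ₁ μ₂ σ₁ σ₂ ((z s).1) ((z s).2)) := fun s hs =>
    Ffun_eq hσ₁ hσ₂ (hnn1 s hs) (hnn2 s hs)
      (le_trans (hb1 s hs) hM1M) (le_trans (hb2 s hs) hM2M)
  refine ⟨fun s => (z s).1, fun s => (z s).2,
    ⟨fun s hs => ⟨hnn1 s hs, hnn2 s hs⟩, fun s hs => ?_, hz2T, hz1T⟩, ?_⟩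
  · constructor
    · have h := hdw_snd (hz s hs)
      rw [hzF s hs] at h
      exact h
    · have h := hdw_fst (hz s hs)
      rw [hzF s hs] at h
      exact h
  -- uniqueness
  intro Q₁ Q₂ hQ s hs
  obtain ⟨hQnn, hQder, hQ2T, hQ1T⟩ := hQ
  have hQb1 : ∀ s ∈ Set.Icc (0:ℝ) T, Q₁ s ≤ M1 := by
    have hg := gron_back (T := T) (K := 2 * |r|) (δ := 1) (by positivity)
      (v := Q₁) (d := fun s => assetRhs1 r μ₁ μ₂ σ₁ σ₂ (Q₁ s) (Q₂ s))
      (fun s hs => (hQder s hs).2) (le_of_eq hQ1T)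
      (fun s hs => by
        show -(assetRhs1 r μ₁ μ₂ σ₁ σ₂ (Q₁ s) (Q₂ s)) ≤ 2 * |r| * Q₁ s
        have hG := G1_ge (r := r) (μ₁ := μ₁) (μ₂ := μ₂) hσ₁ hσ₂ (hQnn s hs).1 (hQnn s hs).2
        rw [← rhs1_eq hσ₁ hσ₂ (hQnn s hs).1 (hQnn s hs).2] at hG
        linarith)
    intro s hs
    calc Q₁ s ≤ 1 * Real.exp (2 * |r| * (T - s)) := hg s hs
      _ ≤ M1 := by
          rw [one_mul, hM1def]
          exact Real.exp_le_exp.2 (by nlinarith [hs.1, hs.2])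
  have hQb2 : ∀ s ∈ Set.Icc (0:ℝ) T, Q₂ s ≤ M2 := by
    have hg := gron_back (T := T) (K := K2) (δ := 1) hK20
      (v := Q₂) (d := fun s => assetRhs2 r μ₁ μ₂ σ₁ σ₂ (Q₁ s) (Q₂ s))
      (fun s hs => (hQder s hs).1) (le_of_eq hQ2T)
      (fun s hs => by
        show -(assetRhs2 r μ₁ μ₂ σ₁ σ₂ (Q₁ s) (Q₂ s)) ≤ K2 * Q₂ s
        have hθ := thetaF_abs (r := r) (μ₁ := μ₁) (μ₂ := μ₂) hσ₁ hσ₂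
          (hQnn s hs).1 (hQnn s hs).2 (hQb1 s hs)
        rw [← hΘbdef] at hθ
        have hG := G2_ge (r := r) (μ₁ := μ₁) (μ₂ := μ₂) hσ₁ hσ₂ (hQnn s hs).2 hθ
        rw [← hK2def, ← rhs2_eq hσ₁ hσ₂ (hQnn s hs).1 (hQnn s hs).2] at hG
        linarith)
    intro s hs
    calc Q₂ s ≤ 1 * Real.exp (K2 * (T - s)) := hg s hs
      _ ≤ M2 := by
          rw [one_mul, hM2def]
          exact Real.exp_le_exp.2 (by nlinarith [hs.1, hs.2])
  have hq : ∀ t ∈ Set.Icc (0:ℝ) T,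
      HasDerivWithinAt (fun s => (Q₁ s, Q₂ s))
        (Ffun r μ₁ μ₂ σ₁ σ₂ M (Q₁ t, Q₂ t)) (Set.Icc (0:ℝ) T) t := by
    intro t ht
    have hFe : Ffun r μ₁ μ₂ σ₁ σ₂ M (Q₁ t, Q₂ t)
        = (assetRhs1 r μ₁ μ₂ σ₁ σ₂ (Q₁ t) (Q₂ t), assetRhs2 r μ₁ μ₂ σ₁ σ₂ (Q₁ t) (Q₂ t)) :=
      Ffun_eq hσ₁ hσ₂ (hQnn t ht).1 (hQnn t ht).2
        (le_trans (hQb1 t ht) hM1M) (le_trans (hQb2 t ht) hM2M)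
    rw [hFe]
    exact ((hQder t ht).2).prodMk ((hQder t ht).1)
  have hKt : ∀ t : ℝ, LipschitzOnWith K0 (fun p => Ffun r μ₁ μ₂ σ₁ σ₂ M p) Set.univ :=
    fun _ => hK0.lipschitzOnWith
  have hderL : ∀ (u : ℝ → ℝ × ℝ),
      (∀ t ∈ Set.Icc (0:ℝ) T,
        HasDerivWithinAt u (Ffun r μ₁ μ₂ σ₁ σ₂ M (u t)) (Set.Icc (0:ℝ) T) t) →
      ∀ t ∈ Set.Ioc (0:ℝ) T,
        HasDerivWithinAt u (Ffun r μ₁ μ₂ σ₁ σ₂ M (u t)) (Set.Iic t) t := by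
    intro u hu t ht
    exact (hu t ⟨ht.1.le, ht.2⟩).mono_of_mem_nhdsWithin (Icc_mem_nhdsLE_of_mem ht)
  have hqc : ContinuousOn (fun s => (Q₁ s, Q₂ s)) (Set.Icc (0:ℝ) T) :=
    fun u hu => (hq u hu).continuousWithinAt
  have hqT : (fun s => (Q₁ s, Q₂ s)) T = z T := by
    rw [hzT]; exact Prod.ext hQ1T hQ2T
  have hEq := ODE_solution_unique_of_mem_Icc_left
    (v := fun _ p => Ffun r μ₁ μ₂ σ₁ σ₂ M p) (s := fun _ => Set.univ) (fun t _ => hKt t)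
    hqc (hderL _ hq) (fun _ _ => trivial)
    hzc (hderL z hz) (fun _ _ => trivial) hqT
  have := hEq hs
  exact ⟨congrArg Prod.fst this, congrArg Prod.snd this⟩
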